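/- Let A, B be positive bounded operators on a complex Hilbert space H such that ‖A‖·1_H ≤ B, with A ≠ 0. Then for every p with 0 ≤ p ≤ 1, p·‖B‖^(p−1)·(B − A) ≤ B^p − A^p. -/

import Mathlib

open scoped NNReal

/-- Tangent line inequality for concave `x ^ p`, `0 ≤ p ≤ 1`. -/
lemma tangent_rpow {p a b : ℝ} (hp0 : 0 ≤ p) (hp1 : p ≤ 1) (ha : 0 < a) (hb : 0 ≤ b) :
    b ^ p ≤ a ^ p + p * a ^ (p - 1) * (b - a) := by
  have hs : -1 ≤ b / a - 1 := by
    have : (0:ℝ) ≤ b / a := by positivity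
    linarith
  have key := rpow_one_add_le_one_add_mul_self hs hp0 hp1
  have h1 : (1 : ℝ) + (b / a - 1) = b / a := by ring
  rw [h1] at key
  have h2 : (b / a) ^ p = b ^ p / a ^ p := Real.div_rpow hb ha.le p
  have hapos : 0 < a ^ p := Real.rpow_pos_of_pos ha p
  rw [h2, div_le_iff₀ hapos] at key
  have hap : a ^ (p - 1) = a ^ p / a := by rw [Real.rpow_sub ha, Real.rpow_one]
  rw [hap]
  have : (1 + p * (b / a - 1)) * a ^ p = a ^ p + p * (a ^ p / a) * (b - a) := by
    field_simp
  linarith [this ▸ key]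

section CFCHelpers

variable {H : Type*} [NormedAddCommGroup H] [InnerProductSpace ℂ H] [CompleteSpace H]

lemma rpow_eq_cfc_real (X : H →L[ℂ] H) (hX : 0 ≤ X) (p : ℝ) :
    X ^ p = cfc (fun x : ℝ => x ^ p) X := by
  rw [CFC.rpow_def, cfc_nnreal_eq_real _ X hX]
  apply cfc_congr
  intro x hx
  have hx0 : 0 ≤ x := spectrum_nonneg_of_nonneg hX hx
  simp [NNReal.coe_rpow, Real.coe_toNNReal x hx0]

lemma cfc_affine (c d : ℝ) (X : H →L[ℂ] H) (hX : IsSelfAdjoint X) :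
    cfc (fun x : ℝ => c + d * x) X = algebraMap ℝ (H →L[ℂ] H) c + d • X := by
  rw [cfc_add (a := X) (fun _ => c) (fun x => d * x), cfc_const c X, cfc_const_mul_id d X]

end CFCHelpers

set_option maxHeartbeats 1000000 in
set_option synthInstance.maxHeartbeats 400000 in
/-- Theorem 2.6 (1): for positive bounded operators `A ≠ 0`, `B` with `‖A‖·1 ≤ B` and
`0 ≤ p ≤ 1`, `p·‖B‖^(p−1)·(B − A) ≤ B^p − A^p`, operator powers via the continuous
functional calculus. -/
theorem stmt_13 {H : Type*} [NormedAddCommGroup H] [InnerProductSpace ℂ H] [CompleteSpace H]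
    (A B : H →L[ℂ] H) (hA : 0 ≤ A) (hB : 0 ≤ B) (hA0 : A ≠ 0)
    (hAB : ‖A‖ • (1 : H →L[ℂ] H) ≤ B) (p : ℝ) (hp0 : 0 ≤ p) (hp1 : p ≤ 1) :
    (p * ‖B‖ ^ (p - 1)) • (B - A) ≤ B ^ p - A ^ p := by
  have hBsa : IsSelfAdjoint B := .of_nonneg hB
  have hAsa : IsSelfAdjoint A := .of_nonneg hA
  set m : ℝ := ‖A‖ with hm_def
  set M : ℝ := ‖B‖ with hM_def
  have hm : 0 < m := norm_pos_iff.mpr hA0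
  have hnt : Nontrivial (H →L[ℂ] H) := nontrivial_of_ne A 0 hA0
  have hAB' : algebraMap ℝ (H →L[ℂ] H) m ≤ B := by
    rwa [Algebra.algebraMap_eq_smul_one]
  have hspecB_lb : ∀ x ∈ spectrum ℝ B, m ≤ x :=
    (algebraMap_le_iff_le_spectrum (a := B)).mp hAB'
  have hmM : m ≤ M := hspecB_lb M (CStarAlgebra.norm_mem_spectrum_of_nonneg hB)
  have hM : 0 < M := hm.trans_le hmM
  set d : ℝ := p * M ^ (p - 1) with hd_def
  set c : ℝ := m ^ p - d * m with hc_def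
  -- continuity facts
  have hcontp : ∀ s : Set ℝ, ContinuousOn (fun x : ℝ => x ^ p) s := fun s x _ =>
    (Real.continuousAt_rpow_const x p (Or.inr hp0)).continuousWithinAt
  -- scalar inequality on the spectrum of B
  have hB_scalar : ∀ x ∈ spectrum ℝ B, c + d * x ≤ x ^ p := by
    intro x hx
    have hxm : m ≤ x := hspecB_lb x hx
    have hxM : x ≤ M := (Real.le_norm_self x).trans (spectrum.norm_le_norm_of_mem hx)
    have hxpos : 0 < x := hm.trans_le hxm
    have htan : m ^ p ≤ x ^ p + p * x ^ (p - 1) * (m - x) :=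
      tangent_rpow hp0 hp1 hxpos hm.le
    have hpow : M ^ (p - 1) ≤ x ^ (p - 1) :=
      Real.rpow_le_rpow_of_nonpos hxpos hxM (by linarith)
    have h1 : p * M ^ (p - 1) * (x - m) ≤ p * x ^ (p - 1) * (x - m) := by
      have hxm0 : 0 ≤ x - m := by linarith
      have h2 := mul_le_mul_of_nonneg_right hpow (mul_nonneg hp0 hxm0)
      calc p * M ^ (p - 1) * (x - m) = M ^ (p - 1) * (p * (x - m)) := by ring
        _ ≤ x ^ (p - 1) * (p * (x - m)) := h2
        _ = p * x ^ (p - 1) * (x - m) := by ring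
    simp only [hc_def, hd_def]
    nlinarith
  -- scalar inequality on the spectrum of A
  have hA_scalar : ∀ y ∈ spectrum ℝ A, y ^ p ≤ c + d * y := by
    intro y hy
    have hy0 : 0 ≤ y := spectrum_nonneg_of_nonneg hA hy
    have hym : y ≤ m := (Real.le_norm_self y).trans (spectrum.norm_le_norm_of_mem hy)
    have htan : y ^ p ≤ m ^ p + p * m ^ (p - 1) * (y - m) :=
      tangent_rpow hp0 hp1 hm hy0
    have hpow : M ^ (p - 1) ≤ m ^ (p - 1) :=
      Real.rpow_le_rpow_of_nonpos hm hmM (by linarith)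
    have h1 : p * m ^ (p - 1) * (y - m) ≤ p * M ^ (p - 1) * (y - m) := by
      have hym0 : y - m ≤ 0 := by linarith
      have h2 := mul_le_mul_of_nonneg_left hpow hp0
      exact mul_le_mul_of_nonpos_right h2 hym0
    simp only [hc_def, hd_def]
    nlinarith
  have keyB : cfc (fun x : ℝ => c + d * x) B ≤ cfc (fun x : ℝ => x ^ p) B :=
    cfc_mono hB_scalar (by fun_prop) (hcontp _)
  have keyA : cfc (fun x : ℝ => x ^ p) A ≤ cfc (fun x : ℝ => c + d * x) A :=
    cfc_mono hA_scalar (hcontp _) (by fun_prop)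
  rw [cfc_affine c d B hBsa] at keyB
  rw [cfc_affine c d A hAsa] at keyA
  rw [← rpow_eq_cfc_real B hB p] at keyB
  rw [← rpow_eq_cfc_real A hA p] at keyA
  calc (p * M ^ (p - 1)) • (B - A)
      = (algebraMap ℝ (H →L[ℂ] H) c + d • B) - (algebraMap ℝ (H →L[ℂ] H) c + d • A) := by
        rw [hd_def, smul_sub]; abel
    _ ≤ B ^ p - A ^ p := sub_le_sub keyB keyA
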